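/- Let μ1 and μ2 be r×r diagonal real matrices with strictly positive diagonal entries satisfying Tr(μ1²) = Tr(μ2²) = 1. Suppose complex r×r matrices α, β and a complex number c satisfy α μ2 βᵀ = μ1 and βᵀ μ1 α = c μ2. Then c = 1, α is invertible with βᵀ = α^{-1}, so that α μ2 α^{-1} = μ1, and the diagonal entries of μ1 and μ2 coincide as multisets (μ2 is obtained from μ1 by a permutation of the diagonal entries). -/

import Mathlib

open Matrix BigOperators

/-- The diagonal matrix of the (real) coefficients `μ`, as a complex matrix. -/
noncomputable def diagC {r : ℕ} (μ : Fin r → ℝ) : Matrix (Fin r) (Fin r) ℂ :=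
  Matrix.diagonal fun i => (μ i : ℂ)

theorem saturation_forces_similarity {r : ℕ} (μ1 μ2 : Fin r → ℝ)
    (h1 : ∀ i, 0 < μ1 i) (h2 : ∀ i, 0 < μ2 i)
    (hn1 : ∑ i, μ1 i ^ 2 = 1) (hn2 : ∑ i, μ2 i ^ 2 = 1)
    (α β : Matrix (Fin r) (Fin r) ℂ) (c : ℂ)
    (e1 : α * diagC μ2 * βᵀ = diagC μ1)
    (e2 : βᵀ * diagC μ1 * α = c • diagC μ2) :
    c = 1 ∧ IsUnit α ∧ βᵀ = α⁻¹ ∧ α * diagC μ2 * α⁻¹ = diagC μ1 ∧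
      ∃ σ : Equiv.Perm (Fin r), ∀ i, μ2 i = μ1 (σ i) := by
  have t1 : Matrix.trace (diagC μ1 * diagC μ1) = 1 := by
    simp only [diagC, Matrix.diagonal_mul_diagonal, Matrix.trace_diagonal]
    have : (((∑ i, μ1 i ^ 2 : ℝ)) : ℂ) = 1 := by exact_mod_cast hn1
    push_cast at this
    rw [← this]
    exact Finset.sum_congr rfl fun i _ => by ring
  have t2 : Matrix.trace (diagC μ2 * diagC μ2) = 1 := by
    simp only [diagC, Matrix.diagonal_mul_diagonal, Matrix.trace_diagonal]
    have : (((∑ i, μ2 i ^ 2 : ℝ)) : ℂ) = 1 := by exact_mod_cast hn2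
    push_cast at this
    rw [← this]
    exact Finset.sum_congr rfl fun i _ => by ring
  have hc : c = 1 := by
    have chain : Matrix.trace (diagC μ1 * diagC μ1) = c * Matrix.trace (diagC μ2 * diagC μ2) := by
      calc Matrix.trace (diagC μ1 * diagC μ1)
          = Matrix.trace ((α * diagC μ2 * βᵀ) * diagC μ1) := by rw [e1]
        _ = Matrix.trace (α * (diagC μ2 * βᵀ * diagC μ1)) := by simp only [Matrix.mul_assoc]
        _ = Matrix.trace ((diagC μ2 * βᵀ * diagC μ1) * α) := Matrix.trace_mul_comm _ _
        _ = Matrix.trace (diagC μ2 * (βᵀ * diagC μ1 * α)) := by simp only [Matrix.mul_assoc]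
        _ = Matrix.trace (diagC μ2 * (c • diagC μ2)) := by rw [e2]
        _ = c * Matrix.trace (diagC μ2 * diagC μ2) := by
              rw [Matrix.mul_smul, Matrix.trace_smul]; simp
    rw [t1, t2, mul_one] at chain
    exact chain.symm
  -- invertibility of α
  have hdet1 : (diagC μ1).det ≠ 0 := by
    simp only [diagC, Matrix.det_diagonal]
    exact Finset.prod_ne_zero_iff.mpr fun i _ => by
      exact_mod_cast (h1 i).ne'
  have hdetα : α.det ≠ 0 := by
    intro h
    apply hdet1
    rw [← e1, Matrix.det_mul, Matrix.det_mul, h, zero_mul, zero_mul]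
  have hα : IsUnit α := by
    rw [Matrix.isUnit_iff_isUnit_det]
    exact isUnit_iff_ne_zero.mpr hdetα
  have hinv1 : α⁻¹ * α = 1 := Matrix.nonsing_inv_mul α (isUnit_iff_ne_zero.mpr hdetα)
  have hinv2 : α * α⁻¹ = 1 := Matrix.mul_nonsing_inv α (isUnit_iff_ne_zero.mpr hdetα)
  -- the two expressions for βᵀ
  have h3 : diagC μ2 * βᵀ = α⁻¹ * diagC μ1 := by
    calc diagC μ2 * βᵀ = (α⁻¹ * α) * (diagC μ2 * βᵀ) := by rw [hinv1, one_mul]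
      _ = α⁻¹ * (α * diagC μ2 * βᵀ) := by simp only [Matrix.mul_assoc]
      _ = α⁻¹ * diagC μ1 := by rw [e1]
  have h4 : βᵀ * diagC μ1 = diagC μ2 * α⁻¹ := by
    have := congrArg (· * α⁻¹) e2
    rw [hc, one_smul] at this
    calc βᵀ * diagC μ1 = βᵀ * diagC μ1 * (α * α⁻¹) := by rw [hinv2, mul_one]
      _ = (βᵀ * diagC μ1 * α) * α⁻¹ := by simp only [Matrix.mul_assoc]
      _ = diagC μ2 * α⁻¹ := this
  -- entrywise facts
  have h3' : ∀ i j, (μ2 i : ℂ) * βᵀ i j = α⁻¹ i j * (μ1 j : ℂ) := by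
    intro i j
    have := congrFun (congrFun h3 i) j
    simpa [diagC, Matrix.diagonal_mul, Matrix.mul_diagonal] using this
  have h4' : ∀ i j, βᵀ i j * (μ1 j : ℂ) = (μ2 i : ℂ) * α⁻¹ i j := by
    intro i j
    have := congrFun (congrFun h4 i) j
    simpa [diagC, Matrix.diagonal_mul, Matrix.mul_diagonal] using this
  have hkey : ∀ i j, α⁻¹ i j ≠ 0 → μ2 i = μ1 j := by
    intro i j hij
    have e : α⁻¹ i j * ((μ1 j : ℂ) * (μ1 j : ℂ)) = α⁻¹ i j * ((μ2 i : ℂ) * (μ2 i : ℂ)) := by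
      have a1 := h3' i j
      have a2 := h4' i j
      calc α⁻¹ i j * ((μ1 j : ℂ) * (μ1 j : ℂ)) = ((μ2 i : ℂ) * βᵀ i j) * (μ1 j : ℂ) := by
            rw [a1]; ring
        _ = (μ2 i : ℂ) * (βᵀ i j * (μ1 j : ℂ)) := by ring
        _ = α⁻¹ i j * ((μ2 i : ℂ) * (μ2 i : ℂ)) := by rw [a2]; ring
    have e2' : (μ1 j : ℂ) * (μ1 j : ℂ) = (μ2 i : ℂ) * (μ2 i : ℂ) :=
      mul_left_cancel₀ hij e
    have e3 : (μ1 j) * (μ1 j) = (μ2 i) * (μ2 i) := by exact_mod_cast e2'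
    nlinarith [h1 j, h2 i]
  have hβ : βᵀ = α⁻¹ := by
    ext i j
    by_cases hij : α⁻¹ i j = 0
    · have a1 := h3' i j
      rw [hij, zero_mul] at a1
      have : (μ2 i : ℂ) ≠ 0 := by exact_mod_cast (h2 i).ne'
      have := mul_eq_zero.mp a1
      rw [hij]
      tauto
    · have a1 := h3' i j
      rw [hkey i j hij] at a1
      have hμ : (μ1 j : ℂ) ≠ 0 := by exact_mod_cast (h1 j).ne'
      have : (μ1 j : ℂ) * βᵀ i j = (μ1 j : ℂ) * α⁻¹ i j := by rw [a1]; ring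
      exact mul_left_cancel₀ hμ this
  have hconj : α * diagC μ2 * α⁻¹ = diagC μ1 := by rw [← hβ, e1]
  refine ⟨hc, hα, hβ, hconj, ?_⟩
  -- permutation from nonzero determinant of α⁻¹
  have hdetinv : (α⁻¹).det ≠ 0 := by
    rw [Matrix.det_nonsing_inv]
    simp only [Ring.inverse_eq_inv]
    exact inv_ne_zero hdetα
  rw [Matrix.det_apply] at hdetinv
  have hex : ∃ σ : Equiv.Perm (Fin r), ∏ i, α⁻¹ (σ i) i ≠ 0 := by
    by_contra h
    push_neg at h
    apply hdetinv
    apply Finset.sum_eq_zero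
    intro σ _
    rw [h σ, smul_zero]
  obtain ⟨σ, hσ⟩ := hex
  refine ⟨σ⁻¹, fun i => ?_⟩
  have : α⁻¹ (σ (σ⁻¹ i)) (σ⁻¹ i) ≠ 0 := by
    intro h
    apply hσ
    exact Finset.prod_eq_zero (Finset.mem_univ _) h
  have := hkey _ _ this
  simpa using this
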